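/- Let 1 ≤ p < ∞ and let f : [0,1] → [0,1] have finite total Wiener p-variation. For every ε > 0 there exists η > 0 such that for any finite sequence 0 ≤ x₁ < x₂ < ⋯ < x_m ≤ 1 with f(x_j) < η for all j ∈ {1,…,m}, one has (Σ_{j=1}^{m−1} |f(x_{j+1}) − f(x_j)|^p)^{1/p} < ε. -/

import Mathlib

/-- The set of all Wiener `p`-variation sums of a real function `f` over partitions of `[a,b]`. -/
def varSumsR (p : ℝ) (f : ℝ → ℝ) (a b : ℝ) : Set ℝ :=
  {s | ∃ (m : ℕ) (t : ℕ → ℝ), 0 < m ∧ t 0 = a ∧ t m = b ∧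
        (∀ j < m, t j < t (j + 1)) ∧
        s = ∑ j ∈ Finset.range m, |f (t (j + 1)) - f (t j)| ^ p}

namespace Stmt7Aux

noncomputable def vsumA (p : ℝ) (φ : ℝ → ℝ) : Option ℝ → List ℝ → ℝ
  | _, [] => 0
  | none, a :: l => vsumA p φ (some (φ a)) l
  | some w, a :: l => |φ a - w| ^ p + vsumA p φ (some (φ a)) l

variable {p : ℝ} {φ : ℝ → ℝ}

@[simp] lemma vsumA_nil (o : Option ℝ) : vsumA p φ o [] = 0 := by
  cases o <;> rfl

lemma vsumA_none_cons {a : ℝ} {l : List ℝ} :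
    vsumA p φ none (a :: l) = vsumA p φ (some (φ a)) l := rfl

lemma vsumA_some_cons {w a : ℝ} {l : List ℝ} :
    vsumA p φ (some w) (a :: l) = |φ a - w| ^ p + vsumA p φ (some (φ a)) l := rfl

lemma vsumA_nonneg (o : Option ℝ) (l : List ℝ) : 0 ≤ vsumA p φ o l := by
  induction l generalizing o with
  | nil => simp
  | cons a l ih =>
    cases o with
    | none => rw [vsumA_none_cons]; exact ih _
    | some w =>
      rw [vsumA_some_cons]
      exact add_nonneg (Real.rpow_nonneg (abs_nonneg _) _) (ih _)

lemma vsumA_anchor_drop (w : ℝ) (l : List ℝ) :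
    vsumA p φ none l ≤ vsumA p φ (some w) l := by
  cases l with
  | nil => simp
  | cons a l =>
    rw [vsumA_none_cons, vsumA_some_cons]
    exact le_add_of_nonneg_left (Real.rpow_nonneg (abs_nonneg _) _)

lemma vsumA_append (o : Option ℝ) (l l' : List ℝ) :
    vsumA p φ o l ≤ vsumA p φ o (l ++ l') := by
  induction l generalizing o with
  | nil => simpa using vsumA_nonneg (p := p) (φ := φ) o l'
  | cons a l ih =>
    cases o with
    | none =>
      rw [List.cons_append, vsumA_none_cons, vsumA_none_cons]
      exact ih _
    | some w =>
      rw [List.cons_append, vsumA_some_cons, vsumA_some_cons]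
      exact add_le_add_right (ih _) _

lemma vsumA_congr {ψ : ℝ → ℝ} : ∀ {l : List ℝ}, (∀ x ∈ l, φ x = ψ x) →
    ∀ o : Option ℝ, vsumA p φ o l = vsumA p ψ o l := by
  intro l
  induction l with
  | nil => intro _ o; simp
  | cons a l ih =>
    intro h o
    have ha : φ a = ψ a := h a (List.mem_cons_self)
    have h' : ∀ x ∈ l, φ x = ψ x := fun x hx => h x (List.mem_cons_of_mem _ hx)
    cases o with
    | none => rw [vsumA_none_cons, vsumA_none_cons, ha, ih h' _]
    | some w => rw [vsumA_some_cons, vsumA_some_cons, ha, ih h' _]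

/-- key inequality: `|b - w|^p ≤ w^p + b^p` for nonneg `w`, `b`. -/
lemma abs_sub_rpow_le (hp0 : 0 ≤ p) {w b : ℝ} (hw : 0 ≤ w) (hb : 0 ≤ b) :
    |b - w| ^ p ≤ w ^ p + b ^ p := by
  have h1 : |b - w| ≤ max w b := by
    rw [abs_le]
    constructor
    · have := le_max_left w b; linarith
    · have := le_max_right w b; linarith
  have h2 : |b - w| ^ p ≤ max w b ^ p :=
    Real.rpow_le_rpow (abs_nonneg _) h1 hp0
  rcases le_total w b with h | h
  · rw [max_eq_right h] at h2
    exact h2.trans (le_add_of_nonneg_left (Real.rpow_nonneg hw _))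
  · rw [max_eq_left h] at h2
    exact h2.trans (le_add_of_nonneg_right (Real.rpow_nonneg hb _))

/-- superadditivity of rpow for `p ≥ 1`. -/
lemma rpow_superadd (hp : 1 ≤ p) {u v : ℝ} (hu : 0 ≤ u) (hv : 0 ≤ v) :
    u ^ p + v ^ p ≤ (u + v) ^ p := by
  have h := NNReal.add_rpow_le_rpow_add u.toNNReal v.toNNReal hp
  have h2 : ((u.toNNReal : ℝ)) ^ p + ((v.toNNReal : ℝ)) ^ p
      ≤ (((u.toNNReal : ℝ)) + ((v.toNNReal : ℝ))) ^ p := by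
    have := NNReal.coe_le_coe.mpr h
    push_cast [NNReal.coe_rpow] at this
    exact_mod_cast this
  rwa [Real.coe_toNNReal u hu, Real.coe_toNNReal v hv] at h2

lemma slice_mono {η a b : ℝ} (hab : a ≤ b) : a - min a η ≤ b - min b η := by
  have h1 := min_add_max a η
  have h2 := min_add_max b η
  have h3 : max a η ≤ max b η := max_le_max hab le_rfl
  linarith

lemma slice_abs (η a b : ℝ) :
    |a - b| = |min a η - min b η| + |(a - min a η) - (b - min b η)| := by
  rcases le_total a b with h | h
  · rw [abs_of_nonpos (by linarith : a - b ≤ 0),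
      abs_of_nonpos (sub_nonpos.mpr (min_le_min h le_rfl)),
      abs_of_nonpos (sub_nonpos.mpr (slice_mono h))]
    have h1 := min_add_max a η
    have h2 := min_add_max b η
    ring
  · rw [abs_of_nonneg (by linarith : 0 ≤ a - b),
      abs_of_nonneg (sub_nonneg.mpr (min_le_min h le_rfl)),
      abs_of_nonneg (sub_nonneg.mpr (slice_mono h))]
    ring

/-- slicing inequality, anchored version -/
lemma vsumA_slice_some (hp : 1 ≤ p) (f : ℝ → ℝ) (η : ℝ) :
    ∀ (l : List ℝ) (w : ℝ),
      vsumA p (fun x => min (f x) η) (some (min w η)) l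
        + vsumA p (fun x => f x - min (f x) η) (some (w - min w η)) l
      ≤ vsumA p f (some w) l := by
  intro l
  induction l with
  | nil => intro w; simp
  | cons a l ih =>
    intro w
    rw [vsumA_some_cons, vsumA_some_cons, vsumA_some_cons]
    have hterm : |min (f a) η - min w η| ^ p + |(f a - min (f a) η) - (w - min w η)| ^ p
        ≤ |f a - w| ^ p := by
      have := rpow_superadd hp (abs_nonneg (min (f a) η - min w η))
        (abs_nonneg ((f a - min (f a) η) - (w - min w η)))
      rwa [← slice_abs η (f a) w] at this
    have := ih (f a)
    linarith

lemma vsumA_slice_none (hp : 1 ≤ p) (f : ℝ → ℝ) (η : ℝ) (l : List ℝ) :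
    vsumA p (fun x => min (f x) η) none l
      + vsumA p (fun x => f x - min (f x) η) none l
    ≤ vsumA p f none l := by
  cases l with
  | nil => simp
  | cons a l =>
    rw [vsumA_none_cons, vsumA_none_cons, vsumA_none_cons]
    exact vsumA_slice_some hp f η l (f a)

/-- zero-insertion monotonicity: enlarging a chain by points where `φ` vanishes
only increases the sum (for nonneg `φ`). -/
lemma vsumA_zero_sublist (hp0 : 0 ≤ p) : ∀ {s t : List ℝ}, s.Sublist t →
    t.Pairwise (· < ·) → (∀ x ∈ t, 0 ≤ φ x) → (∀ x ∈ t, x ∉ s → φ x = 0) →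
    ∀ o : Option ℝ, (∀ w, o = some w → 0 ≤ w) → vsumA p φ o s ≤ vsumA p φ o t := by
  intro s t hsub
  induction hsub with
  | slnil => intro _ _ _ o _; exact le_rfl
  | @cons s t a hsub ih =>
    intro hsort hpos hz o ho
    have hta : ∀ b ∈ t, a < b := (List.pairwise_cons.mp hsort).1
    have hat : a ∉ t := fun h => lt_irrefl a (hta a h)
    have has : a ∉ s := fun h => hat (hsub.subset h)
    have hpa : φ a = 0 := hz a (List.mem_cons_self) has
    have hsort' : t.Pairwise (· < ·) := (List.pairwise_cons.mp hsort).2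
    have hpos' : ∀ x ∈ t, 0 ≤ φ x := fun x hx => hpos x (List.mem_cons_of_mem _ hx)
    have hz' : ∀ x ∈ t, x ∉ s → φ x = 0 := fun x hx hxs => hz x (List.mem_cons_of_mem _ hx) hxs
    cases o with
    | none =>
      rw [vsumA_none_cons, hpa]
      calc vsumA p φ none s ≤ vsumA p φ (some 0) s := vsumA_anchor_drop 0 s
        _ ≤ vsumA p φ (some 0) t := ih hsort' hpos' hz' (some 0) (by rintro w ⟨rfl⟩; exact le_rfl)
    | some w =>
      have hw : 0 ≤ w := ho w rfl
      rw [vsumA_some_cons, hpa]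
      cases s with
      | nil =>
        simp only [vsumA_nil]
        exact add_nonneg (Real.rpow_nonneg (abs_nonneg _) _) (vsumA_nonneg _ _)
      | cons b s' =>
        have hb : 0 ≤ φ b :=
          hpos b (List.mem_cons_of_mem _ (hsub.subset (List.mem_cons_self)))
        have key : |φ b - w| ^ p ≤ |(0:ℝ) - w| ^ p + |φ b| ^ p := by
          rw [zero_sub, abs_neg, abs_of_nonneg hw, abs_of_nonneg hb]
          exact abs_sub_rpow_le hp0 hw hb
        have h2 : vsumA p φ (some 0) (b :: s') ≤ vsumA p φ (some 0) t :=
          ih hsort' hpos' hz' (some 0) (by rintro w' ⟨rfl⟩; exact le_rfl)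
        rw [vsumA_some_cons] at h2 ⊢
        rw [sub_zero] at h2
        linarith
  | @cons_cons s t a hsub ih =>
    intro hsort hpos hz o ho
    have hta : ∀ b ∈ t, a < b := (List.pairwise_cons.mp hsort).1
    have hat : a ∉ t := fun h => lt_irrefl a (hta a h)
    have hsort' : t.Pairwise (· < ·) := (List.pairwise_cons.mp hsort).2
    have hpos' : ∀ x ∈ t, 0 ≤ φ x := fun x hx => hpos x (List.mem_cons_of_mem _ hx)
    have hz' : ∀ x ∈ t, x ∉ s → φ x = 0 := by
      intro x hx hxs
      refine hz x (List.mem_cons_of_mem _ hx) ?_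
      intro hmem
      rcases List.mem_cons.mp hmem with rfl | hmem'
      · exact hat hx
      · exact hxs hmem'
    have hfa : 0 ≤ φ a := hpos a (List.mem_cons_self)
    cases o with
    | none =>
      rw [vsumA_none_cons, vsumA_none_cons]
      exact ih hsort' hpos' hz' (some (φ a)) (by rintro w ⟨rfl⟩; exact hfa)
    | some w =>
      rw [vsumA_some_cons, vsumA_some_cons]
      exact add_le_add_right (ih hsort' hpos' hz' (some (φ a)) (by rintro w' ⟨rfl⟩; exact hfa)) _

/-- bounded-insertion: enlarging a chain by arbitrary points where `0 ≤ φ ≤ c`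
loses at most `c^p` per inserted point. -/
lemma vsumA_loss_sublist (hp0 : 0 ≤ p) {c : ℝ} (hc : 0 ≤ c) :
    ∀ {s t : List ℝ}, s.Sublist t →
    (∀ x ∈ t, φ x ∈ Set.Icc 0 c) →
    ∀ o : Option ℝ, (∀ w, o = some w → w ∈ Set.Icc 0 c) →
    vsumA p φ o s ≤ vsumA p φ o t + ((t.length - s.length : ℕ) : ℝ) * c ^ p := by
  intro s t hsub
  induction hsub with
  | slnil => intro _ o _; simp
  | @cons s t a hsub ih =>
    intro hb o ho
    have hb' : ∀ x ∈ t, φ x ∈ Set.Icc 0 c := fun x hx => hb x (List.mem_cons_of_mem _ hx)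
    have hfa : φ a ∈ Set.Icc 0 c := hb a (List.mem_cons_self)
    have hlen : s.length ≤ t.length := hsub.length_le
    have hcast : (((a :: t).length - s.length : ℕ) : ℝ)
        = ((t.length - s.length : ℕ) : ℝ) + 1 := by
      simp only [List.length_cons]
      rw [Nat.succ_sub hlen]
      push_cast
      ring
    have hcp : 0 ≤ c ^ p := Real.rpow_nonneg hc _
    cases o with
    | none =>
      rw [vsumA_none_cons, hcast]
      have h1 : vsumA p φ none s ≤ vsumA p φ (some (φ a)) s := vsumA_anchor_drop _ _
      have h2 := ih hb' (some (φ a)) (by rintro w ⟨rfl⟩; exact hfa)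
      nlinarith
    | some w =>
      have hw : w ∈ Set.Icc 0 c := ho w rfl
      rw [vsumA_some_cons, hcast]
      cases s with
      | nil =>
        simp only [vsumA_nil]
        have := vsumA_nonneg (p := p) (φ := φ) (some (φ a)) t
        have := Real.rpow_nonneg (abs_nonneg (φ a - w)) p
        have h0 : (((t.length : ℕ) - ([] : List ℝ).length : ℕ) : ℝ) ≥ 0 := by positivity
        nlinarith
      | cons b s' =>
        have hfb : φ b ∈ Set.Icc 0 c :=
          hb' b (hsub.subset (List.mem_cons_self))
        rw [vsumA_some_cons]
        have key1 : |φ b - w| ^ p ≤ c ^ p := by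
          apply Real.rpow_le_rpow (abs_nonneg _) _ hp0
          rw [abs_le]
          constructor
          · have := hfb.1; have := hw.2; linarith
          · have := hfb.2; have := hw.1; linarith
        have h2 := ih hb' (some (φ a)) (by rintro w' ⟨rfl⟩; exact hfa)
        rw [vsumA_some_cons] at h2
        have h3 : 0 ≤ |φ b - φ a| ^ p := Real.rpow_nonneg (abs_nonneg _) _
        have h4 : 0 ≤ |φ a - w| ^ p := Real.rpow_nonneg (abs_nonneg _) _
        linarith
  | @cons_cons s t a hsub ih =>
    intro hb o ho
    have hb' : ∀ x ∈ t, φ x ∈ Set.Icc 0 c := fun x hx => hb x (List.mem_cons_of_mem _ hx)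
    have hfa : φ a ∈ Set.Icc 0 c := hb a (List.mem_cons_self)
    have hcast : (((a :: t).length - (a :: s).length : ℕ) : ℝ)
        = ((t.length - s.length : ℕ) : ℝ) := by
      simp [Nat.succ_sub_succ]
    cases o with
    | none =>
      rw [vsumA_none_cons, vsumA_none_cons, hcast]
      exact ih hb' (some (φ a)) (by rintro w ⟨rfl⟩; exact hfa)
    | some w =>
      rw [vsumA_some_cons, vsumA_some_cons, hcast, add_assoc]
      exact add_le_add_right (ih hb' (some (φ a)) (by rintro w' ⟨rfl⟩; exact hfa)) _

/-- explicit sum formula -/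
lemma vsum_eq_sum (p : ℝ) (φ : ℝ → ℝ) : ∀ l : List ℝ,
    vsumA p φ none l
      = ∑ j ∈ Finset.range (l.length - 1), |φ (l.getD (j+1) 0) - φ (l.getD j 0)| ^ p := by
  intro l
  induction l with
  | nil => simp
  | cons a l ih =>
    cases l with
    | nil => simp [vsumA]
    | cons b l' =>
      rw [vsumA_none_cons, vsumA_some_cons]
      have hlen : (a :: b :: l').length - 1 = ((b :: l').length - 1) + 1 := by
        simp
      rw [hlen, Finset.sum_range_succ']
      have hshift : ∀ i : ℕ,
          |φ ((a :: b :: l').getD (i+1+1) 0) - φ ((a :: b :: l').getD (i+1) 0)| ^ p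
            = |φ ((b :: l').getD (i+1) 0) - φ ((b :: l').getD i 0)| ^ p := by
        intro i
        simp [List.getD_cons_succ]
      rw [Finset.sum_congr rfl (fun i _ => hshift i)]
      have h0 : |φ ((a :: b :: l').getD 1 0) - φ ((a :: b :: l').getD 0 0)| ^ p
          = |φ b - φ a| ^ p := by simp
      rw [h0, ← vsumA_none_cons, ih]
      ring

lemma sublist_of_subset_sorted {s t : List ℝ} (hs : s.Pairwise (· < ·))
    (ht : t.Pairwise (· < ·)) (hsub : s ⊆ t) : s.Sublist t := by
  haveI : Std.Antisymm (α := ℝ) (· < ·) := ⟨fun a b h h' => absurd h' (asymm h)⟩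
  have hnd : s.Nodup := hs.imp ne_of_lt
  exact List.sublist_of_subperm_of_pairwise (hnd.subperm hsub) hs ht

/-! ### Finset chains -/

lemma eq_of_perm_of_sorted' {l₁ l₂ : List ℝ} {r : ℝ → ℝ → Prop} [Std.Antisymm r]
    (hp : l₁.Perm l₂) (h1 : l₁.Pairwise r) (h2 : l₂.Pairwise r) : l₁ = l₂ :=
  hp.eq_of_pairwise' h1 h2

noncomputable def chainL (c : Finset ℝ) : List ℝ := c.sort (· ≤ ·)

noncomputable def vs (p : ℝ) (f : ℝ → ℝ) (c : Finset ℝ) : ℝ := vsumA p f none (chainL c)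

lemma chainL_sorted (c : Finset ℝ) : (chainL c).Pairwise (· ≤ ·) := Finset.pairwise_sort _ _

lemma chainL_sorted_lt (c : Finset ℝ) : (chainL c).Pairwise (· < ·) := (Finset.sortedLT_sort c).pairwise

lemma mem_chainL {c : Finset ℝ} {x : ℝ} : x ∈ chainL c ↔ x ∈ c := Finset.mem_sort _

lemma length_chainL (c : Finset ℝ) : (chainL c).length = c.card := Finset.length_sort _

lemma chainL_sublist {c d : Finset ℝ} (h : c ⊆ d) : (chainL c).Sublist (chainL d) :=
  sublist_of_subset_sorted (chainL_sorted_lt c) (chainL_sorted_lt d)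
    (fun x hx => mem_chainL.mpr (h (mem_chainL.mp hx)))

lemma toFinset_chainL {l : List ℝ} (hl : l.Pairwise (· < ·)) : chainL l.toFinset = l := by
  apply eq_of_perm_of_sorted' (r := (· ≤ ·))
  · exact (Finset.sort_perm_toList _ _).trans (List.toFinset_toList (hl.imp ne_of_lt))
  · exact chainL_sorted _
  · exact hl.imp le_of_lt

lemma chainL_insert_min {c : Finset ℝ} {a : ℝ} (ha : ∀ x ∈ c, a ≤ x) (hac : a ∉ c) :
    chainL (insert a c) = a :: chainL c := by
  apply eq_of_perm_of_sorted' (r := (· ≤ ·))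
  · exact (Finset.sort_perm_toList _ _).trans
      ((Finset.toList_insert hac).trans ((Finset.sort_perm_toList c (· ≤ ·)).symm.cons a))
  · exact chainL_sorted _
  · exact List.pairwise_cons.mpr ⟨fun b hb => ha b (mem_chainL.mp hb), chainL_sorted c⟩

lemma chainL_insert_max {c : Finset ℝ} {a : ℝ} (ha : ∀ x ∈ c, x ≤ a) (hac : a ∉ c) :
    chainL (insert a c) = chainL c ++ [a] := by
  apply eq_of_perm_of_sorted' (r := (· ≤ ·))
  · refine (Finset.sort_perm_toList _ _).trans ?_
    refine (Finset.toList_insert hac).trans ?_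
    refine ((Finset.sort_perm_toList c (· ≤ ·)).symm.cons a).trans ?_
    exact (List.perm_append_singleton a (chainL c)).symm
  · exact chainL_sorted _
  · rw [List.pairwise_append]
    refine ⟨chainL_sorted c, List.pairwise_singleton _ _, ?_⟩
    intro x hx y hy
    rw [List.mem_singleton] at hy
    subst hy
    exact ha x (mem_chainL.mp hx)

lemma vs_le_insert_min {f : ℝ → ℝ} {c : Finset ℝ} {a : ℝ} (ha : ∀ x ∈ c, a ≤ x) :
    vs p f c ≤ vs p f (insert a c) := by
  by_cases hac : a ∈ c
  · rw [Finset.insert_eq_self.mpr hac]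
  · rw [vs, vs, chainL_insert_min ha hac, vsumA_none_cons]
    exact vsumA_anchor_drop _ _

lemma vs_le_insert_max {f : ℝ → ℝ} {c : Finset ℝ} {a : ℝ} (ha : ∀ x ∈ c, x ≤ a) :
    vs p f c ≤ vs p f (insert a c) := by
  by_cases hac : a ∈ c
  · rw [Finset.insert_eq_self.mpr hac]
  · rw [vs, vs, chainL_insert_max ha hac]
    exact vsumA_append _ _ _

lemma sorted_le_getElem {l : List ℝ} (hl : l.Pairwise (· ≤ ·)) {i j : ℕ}
    (hi : i < l.length) (hj : j < l.length) (hij : i ≤ j) : l[i] ≤ l[j] := by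
  rcases eq_or_lt_of_le hij with rfl | h
  · exact le_rfl
  · exact List.pairwise_iff_getElem.mp hl i j hi hj h

lemma vs_mem_varSums (p : ℝ) (f : ℝ → ℝ) {d : Finset ℝ} (hd0 : (0:ℝ) ∈ d)
    (hd1 : (1:ℝ) ∈ d) (hsub : ↑d ⊆ Set.Icc (0:ℝ) 1) :
    vs p f d ∈ varSumsR p f 0 1 := by
  classical
  set l := chainL d with hl
  have hlen : l.length = d.card := length_chainL d
  have hcard : 2 ≤ d.card := by
    rw [show (2:ℕ) = 1 + 1 from rfl]
    exact Finset.one_lt_card.mpr ⟨0, hd0, 1, hd1, by norm_num⟩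
  have hlen2 : 2 ≤ l.length := hlen ▸ hcard
  have hmemIcc : ∀ i (hi : i < l.length), l[i] ∈ Set.Icc (0:ℝ) 1 := by
    intro i hi
    exact hsub (mem_chainL.mp (List.getElem_mem hi))
  refine ⟨l.length - 1, fun j => l.getD j 0, ?_, ?_, ?_, ?_, ?_⟩
  · omega
  · -- l.getD 0 0 = 0
    have h0l : (0:ℝ) ∈ l := mem_chainL.mpr hd0
    obtain ⟨i, hi, hieq⟩ := List.mem_iff_getElem.mp h0l
    have hpos : 0 < l.length := by omega
    show l.getD 0 0 = 0
    rw [List.getD_eq_getElem l 0 hpos]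
    have h1 : l[0] ≤ l[i] := sorted_le_getElem (chainL_sorted d) hpos hi (Nat.zero_le i)
    have h2 : (0:ℝ) ≤ l[0] := by exact_mod_cast (hmemIcc 0 hpos).1
    rw [hieq] at h1
    linarith
  · -- l.getD (l.length - 1) 0 = 1
    have h1l : (1:ℝ) ∈ l := mem_chainL.mpr hd1
    obtain ⟨i, hi, hieq⟩ := List.mem_iff_getElem.mp h1l
    have hlast : l.length - 1 < l.length := by omega
    show l.getD (l.length - 1) 0 = 1
    rw [List.getD_eq_getElem l 0 hlast]
    have h1 : l[i] ≤ l[l.length - 1] :=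
      sorted_le_getElem (chainL_sorted d) hi hlast (by omega)
    have h2 : l[l.length - 1] ≤ (1:ℝ) := by exact_mod_cast (hmemIcc _ hlast).2
    rw [hieq] at h1
    linarith
  · intro j hj
    simp only []
    have hj1 : j < l.length := by omega
    have hj2 : j + 1 < l.length := by omega
    rw [List.getD_eq_getElem l 0 hj1, List.getD_eq_getElem l 0 hj2]
    exact List.pairwise_iff_getElem.mp (chainL_sorted_lt d) j (j+1) hj1 hj2 (by omega)
  · exact vsum_eq_sum p f l

lemma vs_le_sSup (p : ℝ) (f : ℝ → ℝ) (hf : BddAbove (varSumsR p f 0 1))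
    {c : Finset ℝ} (hc : ↑c ⊆ Set.Icc (0:ℝ) 1) :
    vs p f c ≤ sSup (varSumsR p f 0 1) := by
  classical
  have h0 : ∀ x ∈ c, (0:ℝ) ≤ x := fun x hx => (hc hx).1
  have h1 : ∀ x ∈ insert (0:ℝ) c, x ≤ 1 := by
    intro x hx
    rcases Finset.mem_insert.mp hx with rfl | hx'
    · norm_num
    · exact (hc hx').2
  have step1 : vs p f c ≤ vs p f (insert 0 c) := vs_le_insert_min h0
  have step2 : vs p f (insert 0 c) ≤ vs p f (insert 1 (insert 0 c)) := vs_le_insert_max h1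
  have hmem : vs p f (insert 1 (insert 0 c)) ∈ varSumsR p f 0 1 := by
    apply vs_mem_varSums
    · exact Finset.mem_insert_of_mem (Finset.mem_insert_self _ _)
    · exact Finset.mem_insert_self _ _
    · intro x hx
      simp only [Finset.coe_insert, Set.mem_insert_iff] at hx
      rcases hx with rfl | rfl | hx'
      · norm_num
      · norm_num
      · exact hc hx'
  exact (step1.trans step2).trans (le_csSup hf hmem)

lemma vs_empty (p : ℝ) (f : ℝ → ℝ) : vs p f (∅ : Finset ℝ) = 0 := by
  rw [vs, chainL, Finset.sort_empty, vsumA_nil]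

lemma mono_trans {x : ℕ → ℝ} {m : ℕ} (h : ∀ j, j + 1 < m → x j < x (j + 1)) :
    ∀ j k, j < k → k < m → x j < x k := by
  intro j k hjk hkm
  induction k with
  | zero => omega
  | succ n ih =>
    rcases Nat.lt_or_ge j n with h1 | h2
    · exact (ih h1 (by omega)).trans (h n hkm)
    · have : j = n := by omega
      subst this
      exact h j hkm

lemma exists_eta (p : ℝ) (f : ℝ → ℝ) (hp0 : 0 ≤ p) (l : List ℝ)
    (hl : ∀ x ∈ l, 0 ≤ f x) {δ : ℝ} (hδ : 0 < δ) :
    ∃ η₀ > 0, ∀ η, 0 < η → η < η₀ →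
      vsumA p f none l - δ ≤ vsumA p (fun x => f x - min (f x) η) none l := by
  set E : ℝ → ℝ := fun η => ∑ j ∈ Finset.range (l.length - 1),
      |(f (l.getD (j+1) 0) - min (f (l.getD (j+1) 0)) η)
        - (f (l.getD j 0) - min (f (l.getD j 0)) η)| ^ p with hE
  have hEeq : ∀ η, vsumA p (fun x => f x - min (f x) η) none l = E η :=
    fun η => vsum_eq_sum p _ l
  have hE0 : E 0 = vsumA p f none l := by
    rw [← hEeq 0]
    apply vsumA_congr
    intro x hx
    rw [min_eq_right (hl x hx), sub_zero]
  have hcont : Continuous E := by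
    apply continuous_finset_sum
    intro j _
    apply Continuous.rpow_const
    · apply Continuous.abs
      exact (continuous_const.sub (continuous_const.min continuous_id)).sub
        (continuous_const.sub (continuous_const.min continuous_id))
    · exact fun _ => Or.inr hp0
  obtain ⟨η₀, hη₀, hball⟩ := Metric.continuousAt_iff.mp hcont.continuousAt δ hδ
  refine ⟨η₀, hη₀, ?_⟩
  intro η hη1 hη2
  have hdist : dist η 0 < η₀ := by
    rw [Real.dist_eq, sub_zero, abs_of_pos hη1]
    exact hη2
  have := hball hdist
  rw [Real.dist_eq] at this
  have h1 : E 0 - δ < E η := by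
    have := abs_sub_lt_iff.mp this
    linarith [this.2]
  rw [hEeq η, ← hE0]
  linarith

lemma step (p : ℝ) (hp : 1 ≤ p) (f : ℝ → ℝ)
    (hrange : ∀ x ∈ Set.Icc (0:ℝ) 1, f x ∈ Set.Icc (0:ℝ) 1)
    {ε : ℝ} (hε : 0 < ε)
    (hcon : ∀ η > 0, ∃ (m : ℕ) (x : ℕ → ℝ), 0 < m ∧ 0 ≤ x 0 ∧ x (m-1) ≤ 1 ∧
      (∀ j, j+1 < m → x j < x (j+1)) ∧ (∀ j < m, f (x j) < η) ∧
      ε ^ p ≤ ∑ j ∈ Finset.range (m-1), |f (x (j+1)) - f (x j)| ^ p)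
    (c : Finset ℝ) (hc : ↑c ⊆ Set.Icc (0:ℝ) 1) :
    ∃ d : Finset ℝ, ↑d ⊆ Set.Icc (0:ℝ) 1 ∧ vs p f c + ε ^ p / 2 ≤ vs p f d := by
  classical
  have hp0 : 0 ≤ p := le_trans zero_le_one hp
  have hppos : 0 < p := lt_of_lt_of_le one_pos hp
  set c0 := ε ^ p with hc0def
  have hc0 : 0 < c0 := Real.rpow_pos_of_pos hε p
  set l := chainL c with hldef
  have hl0 : ∀ y ∈ l, 0 ≤ f y := fun y hy =>
    (hrange y (hc (Finset.mem_coe.mpr (mem_chainL.mp hy)))).1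
  obtain ⟨η₀, hη₀pos, hη₀⟩ := exists_eta p f hp0 l hl0 (δ := c0/4) (by positivity)
  set N := c.card with hNdef
  set ηb := (c0 / (4 * (N+1))) ^ (1/p) with hηbdef
  have hηb : 0 < ηb := Real.rpow_pos_of_pos (by positivity) _
  set η := min (η₀/2) ηb with hηdef
  have hη : 0 < η := lt_min (by linarith) hηb
  have hηlt : η < η₀ := lt_of_le_of_lt (min_le_left _ _) (by linarith)
  have hηppos : 0 ≤ η ^ p := Real.rpow_nonneg hη.le _
  have hηp : (N:ℝ) * η ^ p ≤ c0 / 4 := by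
    have h1 : η ≤ ηb := min_le_right _ _
    have h2 : η ^ p ≤ ηb ^ p := Real.rpow_le_rpow hη.le h1 hp0
    have h3 : ηb ^ p = c0 / (4*((N:ℝ)+1)) := by
      rw [hηbdef, one_div, Real.rpow_inv_rpow (by positivity) hppos.ne']
    rw [h3] at h2
    have hN0 : (0:ℝ) ≤ (N:ℝ) := Nat.cast_nonneg N
    have hN1 : (0:ℝ) < (N:ℝ) + 1 := by positivity
    have h4 : (N:ℝ) * η ^ p ≤ (N:ℝ) * (c0 / (4*((N:ℝ)+1))) :=
      mul_le_mul_of_nonneg_left h2 hN0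
    have h5 : (N:ℝ) * (c0 / (4*((N:ℝ)+1))) ≤ c0/4 := by
      rw [mul_div_assoc', div_le_div_iff₀ (by positivity) (by norm_num : (0:ℝ) < 4)]
      nlinarith
    linarith
  obtain ⟨m, x, hm, hx0, hx1, hxmono, hxsmall, hS⟩ := hcon η hη
  have hxm : ∀ j k, j < k → k < m → x j < x k := mono_trans hxmono
  have hxIcc : ∀ j, j < m → x j ∈ Set.Icc (0:ℝ) 1 := by
    intro j hj
    constructor
    · rcases Nat.eq_zero_or_pos j with rfl | hjpos
      · exact hx0
      · exact hx0.trans (hxm 0 j hjpos hj).le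
    · rcases eq_or_lt_of_le (by omega : j ≤ m - 1) with rfl | hlt
      · exact hx1
      · exact (hxm j (m-1) hlt (by omega)).le.trans hx1
  set xl := (List.range m).map x with hxldef
  have hxl_len : xl.length = m := by simp [hxldef]
  have hxl_get : ∀ j, j < m → xl.getD j 0 = x j := by
    intro j hj
    have hj' : j < xl.length := by omega
    rw [List.getD_eq_getElem _ _ hj']
    simp [hxldef]
  have hxl_sorted : xl.Pairwise (· < ·) := by
    rw [List.pairwise_iff_getElem]
    intro i j hi hj hij
    have hi' : i < m := by rwa [hxl_len] at hi
    have hj' : j < m := by rwa [hxl_len] at hj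
    simp only [hxldef, List.getElem_map, List.getElem_range]
    exact hxm i j hij hj'
  have hxl_mem : ∀ y ∈ xl, ∃ j, j < m ∧ y = x j := by
    intro y hy
    obtain ⟨j, hj, rfl⟩ := List.mem_map.mp hy
    exact ⟨j, List.mem_range.mp hj, rfl⟩
  have hxl_Icc : ∀ y ∈ xl, y ∈ Set.Icc (0:ℝ) 1 := by
    intro y hy
    obtain ⟨j, hj, rfl⟩ := hxl_mem y hy
    exact hxIcc j hj
  have hxl_small : ∀ y ∈ xl, f y < η := by
    intro y hy
    obtain ⟨j, hj, rfl⟩ := hxl_mem y hy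
    exact hxsmall j hj
  have hxl_sum : vsumA p f none xl
      = ∑ j ∈ Finset.range (m-1), |f (x (j+1)) - f (x j)| ^ p := by
    rw [vsum_eq_sum, hxl_len]
    apply Finset.sum_congr rfl
    intro j hj
    have hj' : j < m - 1 := Finset.mem_range.mp hj
    rw [hxl_get j (by omega), hxl_get (j+1) (by omega)]
  set xF := xl.toFinset with hxFdef
  have hchainxF : chainL xF = xl := toFinset_chainL hxl_sorted
  set d := c ∪ xF with hddef
  have hd : ↑d ⊆ Set.Icc (0:ℝ) 1 := by
    intro y hy
    rw [Finset.coe_union, Set.mem_union] at hy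
    rcases hy with hy | hy
    · exact hc hy
    · exact hxl_Icc y (List.mem_toFinset.mp hy)
  refine ⟨d, hd, ?_⟩
  set g := fun y => min (f y) η with hgdef
  set hh := fun y => f y - min (f y) η with hhdef
  set ld := chainL d with hlddef
  have hsub_l : l.Sublist ld := chainL_sublist Finset.subset_union_left
  have hsub_x : xl.Sublist ld := hchainxF ▸ chainL_sublist Finset.subset_union_right
  have hslice := vsumA_slice_none hp f η ld
  have hhpos : ∀ y, 0 ≤ hh y := fun y => sub_nonneg.mpr (min_le_left _ _)
  have hhzero : ∀ y ∈ ld, y ∉ l → hh y = 0 := by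
    intro y hyld hyl
    have hyd : y ∈ d := mem_chainL.mp hyld
    have hyx : y ∈ xl := by
      rcases Finset.mem_union.mp hyd with hyc | hyx
      · exact absurd (mem_chainL.mpr hyc) hyl
      · exact List.mem_toFinset.mp hyx
    have hfy : f y < η := hxl_small y hyx
    simp only [hhdef, min_eq_left hfy.le, sub_self]
  have hh1 : vsumA p hh none l ≤ vsumA p hh none ld :=
    vsumA_zero_sublist hp0 hsub_l (chainL_sorted_lt d) (fun y _ => hhpos y) hhzero none
      (by rintro w ⟨⟩)
  have hh2 : vsumA p f none l - c0/4 ≤ vsumA p hh none l := hη₀ η hη hηlt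
  have hgbound : ∀ y ∈ ld, g y ∈ Set.Icc 0 η := by
    intro y hy
    have hyIcc := hd (Finset.mem_coe.mpr (mem_chainL.mp hy))
    exact ⟨le_min (hrange y hyIcc).1 hη.le, min_le_right _ _⟩
  have hg1 := vsumA_loss_sublist hp0 hη.le hsub_x hgbound none (by rintro w ⟨⟩)
  have hcount : ((ld.length - xl.length : ℕ) : ℝ) * η ^ p ≤ (N:ℝ) * η ^ p := by
    apply mul_le_mul_of_nonneg_right _ hηppos
    have h1 : ld.length = d.card := length_chainL d
    have h2 : d.card ≤ c.card + xF.card := Finset.card_union_le _ _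
    have h3 : xF.card = xl.length :=
      List.toFinset_card_of_nodup (hxl_sorted.imp ne_of_lt)
    have h4 : ld.length - xl.length ≤ N := by omega
    exact_mod_cast h4
  have hgx : vsumA p g none xl = vsumA p f none xl :=
    vsumA_congr (fun y hy => min_eq_left (hxl_small y hy).le) none
  have hSc0 : c0 ≤ vsumA p f none xl := by rw [hxl_sum]; exact hS
  have hfinal1 : vsumA p g none ld ≥ c0 - c0/4 := by
    have := hg1
    rw [hgx] at this
    linarith
  have hfinal2 : vsumA p hh none ld ≥ vsumA p f none l - c0/4 := le_trans hh2 hh1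
  have : vs p f d = vsumA p f none ld := rfl
  have hvsc : vs p f c = vsumA p f none l := rfl
  rw [this, hvsc]
  linarith

end Stmt7Aux

theorem stmt7 (p : ℝ) (hp : 1 ≤ p) (f : ℝ → ℝ)
    (hrange : ∀ x ∈ Set.Icc (0:ℝ) 1, f x ∈ Set.Icc (0:ℝ) 1)
    (hf : BddAbove (varSumsR p f 0 1)) :
    ∀ ε > 0, ∃ η > 0, ∀ (m : ℕ) (x : ℕ → ℝ), 0 < m →
      (0 ≤ x 0) → (x (m - 1) ≤ 1) → (∀ j, j + 1 < m → x j < x (j + 1)) →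
      (∀ j < m, f (x j) < η) →
      (∑ j ∈ Finset.range (m - 1), |f (x (j + 1)) - f (x j)| ^ p) ^ (1 / p) < ε := by
  classical
  have hp0 : 0 ≤ p := le_trans zero_le_one hp
  have hppos : 0 < p := lt_of_lt_of_le one_pos hp
  intro ε hε
  by_contra hcon
  push_neg at hcon
  have hcon' : ∀ η > 0, ∃ (m : ℕ) (x : ℕ → ℝ), 0 < m ∧ 0 ≤ x 0 ∧ x (m-1) ≤ 1 ∧
      (∀ j, j+1 < m → x j < x (j+1)) ∧ (∀ j < m, f (x j) < η) ∧
      ε ^ p ≤ ∑ j ∈ Finset.range (m-1), |f (x (j+1)) - f (x j)| ^ p := by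
    intro η hη
    obtain ⟨m, x, h1, h2, h3, h4, h5, h6⟩ := hcon η hη
    refine ⟨m, x, h1, h2, h3, h4, h5, ?_⟩
    set S := ∑ j ∈ Finset.range (m-1), |f (x (j+1)) - f (x j)| ^ p with hSdef
    have hS0 : 0 ≤ S := Finset.sum_nonneg (fun j _ => Real.rpow_nonneg (abs_nonneg _) _)
    have hmono := Real.rpow_le_rpow hε.le h6 hp0
    rwa [← Real.rpow_mul hS0, one_div_mul_cancel hppos.ne', Real.rpow_one] at hmono
  have iter : ∀ K : ℕ, ∃ c : Finset ℝ, ↑c ⊆ Set.Icc (0:ℝ) 1 ∧ (K:ℝ) * (ε^p/2) ≤ Stmt7Aux.vs p f c := by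
    intro K
    induction K with
    | zero => exact ⟨∅, by simp, by simp [Stmt7Aux.vs_empty]⟩
    | succ n ih =>
      obtain ⟨c, hc, hvc⟩ := ih
      obtain ⟨d, hd, hvd⟩ := Stmt7Aux.step p hp f hrange hε hcon' c hc
      refine ⟨d, hd, ?_⟩
      push_cast
      linarith
  have hc0 : (0:ℝ) < ε^p/2 := by
    have := Real.rpow_pos_of_pos hε p
    linarith
  obtain ⟨K, hK⟩ := exists_nat_gt (sSup (varSumsR p f 0 1) / (ε^p/2))
  obtain ⟨c, hc, hvc⟩ := iter K
  have hle := Stmt7Aux.vs_le_sSup p f hf hc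
  rw [div_lt_iff₀ hc0] at hK
  linarith
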